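/- Let G = (V,E) be a connected finite multigraph and let C(G) = { s ⊆ E : the spanning subgraph (V,s) has no vertex of degree 1 } be the set of sub-coregraphs. Then 2^{n(G)} ≤ |C(G)| ≤ ((5−√5)/2)^{n(G)−1} + ((5+√5)/2)^{n(G)−1}, where n(G) = |E|−|V|+1 is the nullity of G. -/

import Mathlib

open scoped Classical

/-- The polynomials `f_n`: `f 0 = 1`, `f 1 = 0`, `f (n+2) = γ f (n+1) + f n`,
evaluated at `γ`. -/
noncomputable def fval {R : Type*} [CommRing R] (γ : R) : ℕ → R
  | 0 => 1
  | 1 => 0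
  | (n + 2) => γ * fval γ (n + 1) + fval γ n

/-- Degree of vertex `i` in the spanning subgraph `(V, s)` of the multigraph with
edge-endpoint map `ends : E → Sym2 V` (a loop counts twice). -/
noncomputable def mdeg {V E : Type*} [DecidableEq V]
    (ends : E → Sym2 V) (s : Finset E) (i : V) : ℕ :=
  ∑ e ∈ s, (if ends e = Sym2.diag i then 2 else if i ∈ ends e then 1 else 0)

/-- The theta polynomial `θ_G(β,γ) = Σ_{s ⊆ E} β^{|s|} ∏_{i ∈ V} f_{d_i(s)}(γ)`. -/
noncomputable def theta {V E : Type*} [Fintype V] [Fintype E] [DecidableEq V]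
    {R : Type*} [CommRing R] (ends : E → Sym2 V) (β γ : R) : R :=
  ∑ s : Finset E, β ^ s.card * ∏ i : V, fval γ (mdeg ends s i)

lemma fval_add (γ : ℝ) (m n : ℕ) :
    fval γ (m + n) = fval γ m * fval γ n + fval γ (m + 1) * fval γ (n + 1) := by
  induction n using Nat.strong_induction_on generalizing m with
  | _ n ih =>
    match n with
    | 0 => simp [fval]
    | 1 =>
      show fval γ (m + 1) = _
      simp [fval]
    | (k + 2) =>
      have e1 : m + (k + 2) = (m + k) + 2 := by omega
      have e2 : (m + k) + 1 = m + (k + 1) := by omega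
      have h1 : fval γ (m + (k + 2)) = γ * fval γ (m + (k + 1)) + fval γ (m + k) := by
        rw [e1, ← e2]; rfl
      rw [h1, ih (k+1) (by omega) m, ih k (by omega) m]
      have d1 : fval γ (k+2) = γ * fval γ (k+1) + fval γ k := rfl
      have d2 : fval γ (k+2+1) = γ * fval γ (k+2) + fval γ (k+1) := rfl
      rw [d2, d1]
      ring

lemma fval_zero_even (k : ℕ) : fval (0:ℝ) (2 * k) = 1 := by
  induction k with
  | zero => rfl
  | succ k ih =>
    have : 2 * (k + 1) = 2 * k + 2 := by ring
    rw [this]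
    show (0:ℝ) * fval 0 (2*k+1) + fval 0 (2*k) = 1
    simpa using ih

lemma fval_zero_odd (k : ℕ) : fval (0:ℝ) (2 * k + 1) = 0 := by
  induction k with
  | zero => rfl
  | succ k ih =>
    have : 2 * (k + 1) + 1 = (2 * k + 1) + 2 := by ring
    rw [this]
    show (0:ℝ) * fval 0 (2*k+1+1) + fval 0 (2*k+1) = 0
    simpa using ih

lemma fval_one_nonneg (n : ℕ) : 0 ≤ fval (1:ℝ) n := by
  induction n using Nat.strong_induction_on with
  | _ n ih =>
    match n with
    | 0 => norm_num [fval]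
    | 1 => norm_num [fval]
    | (k + 2) =>
      have h1 := ih (k+1) (by omega)
      have h2 := ih k (by omega)
      show 0 ≤ (1:ℝ) * fval 1 (k+1) + fval 1 k
      linarith

lemma fval_one_ge_one (n : ℕ) (hn : n ≠ 1) : 1 ≤ fval (1:ℝ) n := by
  induction n using Nat.strong_induction_on with
  | _ n ih =>
    match n with
    | 0 => norm_num [fval]
    | 1 => exact absurd rfl hn
    | (k + 2) =>
      show 1 ≤ (1:ℝ) * fval 1 (k+1) + fval 1 k
      match k with
      | 0 => norm_num [fval]
      | (j + 1) =>
        have h1 := ih (j + 2) (by omega) (by omega)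
        have h2 := fval_one_nonneg (j+1)
        linarith

lemma s5 : Real.sqrt 5 * Real.sqrt 5 = 5 := Real.mul_self_sqrt (by norm_num)
lemma hs0 : (0:ℝ) < Real.sqrt 5 := Real.sqrt_pos.mpr (by norm_num)
lemma hx0 : (0:ℝ) < (5 - Real.sqrt 5)/2 := by nlinarith [s5, hs0]
lemma hy0 : (0:ℝ) < (5 + Real.sqrt 5)/2 := by nlinarith [s5, hs0]

lemma base_one {E : Type*} [DecidableEq E] (t : Finset E) :
    (5:ℝ) * (∑ s ∈ t.powerset, fval (1:ℝ) (2 * s.card))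
      = ((5+Real.sqrt 5)/2) * ((5-Real.sqrt 5)/2) ^ t.card
        + ((5-Real.sqrt 5)/2) * ((5+Real.sqrt 5)/2) ^ t.card ∧
    (5:ℝ) * (∑ s ∈ t.powerset, fval (1:ℝ) (2 * s.card + 1))
      = Real.sqrt 5 * (((5+Real.sqrt 5)/2) ^ t.card - ((5-Real.sqrt 5)/2) ^ t.card) := by
  have hs := s5
  induction t using Finset.induction_on with
  | empty =>
    constructor
    · simp [fval]; ring
    · simp [fval]
  | @insert a t hat ih =>
    obtain ⟨hE, hO⟩ := ih
    have hins : ∀ k : ℕ, fval (1:ℝ) (2 * (k + 1)) = fval 1 (2*k+1) + fval 1 (2*k) := by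
      intro k
      have : 2 * (k+1) = 2*k + 2 := by ring
      rw [this]
      show (1:ℝ) * fval 1 (2*k+1) + fval 1 (2*k) = _
      ring
    have hins' : ∀ k : ℕ, fval (1:ℝ) (2 * (k + 1) + 1)
        = 2 * fval 1 (2*k+1) + fval 1 (2*k) := by
      intro k
      have e : 2 * (k+1) + 1 = (2*k + 1) + 2 := by ring
      rw [e]
      show (1:ℝ) * fval 1 (2*k+1+1) + fval 1 (2*k+1) = _
      have e2 : fval (1:ℝ) (2*k+1+1) = (1:ℝ) * fval 1 (2*k+1) + fval 1 (2*k) := by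
        rw [show 2*k+1+1 = 2*k+2 from rfl]; rfl
      rw [e2]; ring
    have hcard : ∀ s ∈ t.powerset, (insert a s).card = s.card + 1 := by
      intro s hs'
      exact Finset.card_insert_of_notMem fun h => hat (Finset.mem_powerset.mp hs' h)
    have h2 : ∑ s ∈ t.powerset, fval (1:ℝ) (2 * (insert a s).card)
        = ∑ s ∈ t.powerset, (fval (1:ℝ) (2*s.card+1) + fval 1 (2*s.card)) :=
      Finset.sum_congr rfl (fun s hs' => by rw [hcard s hs', hins s.card])
    have h3 : ∑ s ∈ t.powerset, fval (1:ℝ) (2 * (insert a s).card + 1)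
        = ∑ s ∈ t.powerset, (2 * fval (1:ℝ) (2*s.card+1) + fval 1 (2*s.card)) :=
      Finset.sum_congr rfl (fun s hs' => by rw [hcard s hs', hins' s.card])
    constructor
    · rw [Finset.sum_powerset_insert hat, h2,
        Finset.sum_add_distrib, Finset.card_insert_of_notMem hat, pow_succ, pow_succ]
      linear_combination 2 * hE + hO + ((((5-Real.sqrt 5)/2) ^ t.card + ((5+Real.sqrt 5)/2) ^ t.card)/4) * hs
    · rw [Finset.sum_powerset_insert hat, h3]
      have hsplit : ∑ s ∈ t.powerset, (2 * fval (1:ℝ) (2*s.card+1) + fval 1 (2*s.card))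
          = 2 * (∑ s ∈ t.powerset, fval (1:ℝ) (2*s.card+1))
            + ∑ s ∈ t.powerset, fval (1:ℝ) (2*s.card) := by
        rw [Finset.sum_add_distrib, Finset.mul_sum]
      rw [hsplit, Finset.card_insert_of_notMem hat, pow_succ, pow_succ]
      linear_combination 3 * hO + hE - ((((5-Real.sqrt 5)/2) ^ t.card + ((5+Real.sqrt 5)/2) ^ t.card)/2) * hs

lemma base_zero {E : Type*} [DecidableEq E] (t : Finset E) :
    (∑ s ∈ t.powerset, fval (0:ℝ) (2 * s.card)) = 2 ^ t.card := by
  rw [Finset.sum_congr rfl (fun s _ => fval_zero_even s.card)]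
  simp [Finset.card_powerset]

lemma fval_zero' {R : Type*} [CommRing R] (γ : R) : fval γ 0 = 1 := rfl

lemma exists_step {α : Type*} {r : α → α → Prop} {a b : α}
    (h : Relation.ReflTransGen r a b) (hne : a ≠ b) : ∃ p q, r p q ∧ p ≠ q := by
  induction h with
  | refl => exact absurd rfl hne
  | @tail b' c hab hbc ih =>
    by_cases hbc' : b' = c
    · subst hbc'; exact ih hne
    · exact ⟨b', c, hbc, hbc'⟩

lemma sym2_eq_pair {V : Type*} (z : Sym2 V) {u w : V} (hne : u ≠ w)
    (hu : u ∈ z) (hw : w ∈ z) : z = s(u, w) := by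
  induction z using Sym2.ind with
  | _ p q =>
    simp only [Sym2.mem_iff] at hu hw
    rcases hu with rfl | rfl <;> rcases hw with rfl | rfl <;>
      simp_all [Sym2.eq_iff] <;> tauto


lemma T_map_ne {V : Type*} [DecidableEq V] {u w : V} (z : Sym2 V) (i : V)
    (hiu : i ≠ u) (hiw : i ≠ w) :
    (if Sym2.map (fun v => if v = w then u else v) z = Sym2.diag i then 2
      else if i ∈ Sym2.map (fun v => if v = w then u else v) z then 1 else 0 : ℕ)
    = (if z = Sym2.diag i then 2 else if i ∈ z then 1 else 0) := by
  induction z using Sym2.ind with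
  | _ p q =>
    rw [Sym2.map_pair_eq]
    simp only [Sym2.diag, Sym2.eq_iff, Sym2.mem_iff]
    by_cases hp : p = w <;> by_cases hq : q = w <;>
      simp only [hp, hq, if_pos, if_neg, ite_true, ite_false, if_true, if_false] <;>
      split_ifs <;> simp_all <;> try omega

lemma T_map_w {V : Type*} [DecidableEq V] {u w : V} (huw : u ≠ w) (z : Sym2 V) :
    (if Sym2.map (fun v => if v = w then u else v) z = Sym2.diag w then 2
      else if w ∈ Sym2.map (fun v => if v = w then u else v) z then 1 else 0 : ℕ) = 0 := by
  induction z using Sym2.ind with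
  | _ p q =>
    rw [Sym2.map_pair_eq]
    simp only [Sym2.diag, Sym2.eq_iff, Sym2.mem_iff]
    by_cases hp : p = w <;> by_cases hq : q = w <;>
      simp only [hp, hq, if_pos, if_neg, ite_true, ite_false, if_true, if_false] <;>
      split_ifs <;> simp_all <;> try omega
    all_goals (rcases ‹_ ∨ _› with rfl | rfl <;> simp_all)

lemma T_map_u {V : Type*} [DecidableEq V] {u w : V} (huw : u ≠ w) (z : Sym2 V) :
    (if Sym2.map (fun v => if v = w then u else v) z = Sym2.diag u then 2
      else if u ∈ Sym2.map (fun v => if v = w then u else v) z then 1 else 0 : ℕ)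
    = (if z = Sym2.diag u then 2 else if u ∈ z then 1 else 0)
      + (if z = Sym2.diag w then 2 else if w ∈ z then 1 else 0) := by
  induction z using Sym2.ind with
  | _ p q =>
    rw [Sym2.map_pair_eq]
    simp only [Sym2.diag, Sym2.eq_iff, Sym2.mem_iff]
    by_cases hp : p = w <;> by_cases hq : q = w <;> by_cases hpu : p = u <;> by_cases hqu : q = u <;>
      simp only [hp, hq, hpu, hqu, if_pos, if_neg, ite_true, ite_false, if_true, if_false] <;>
      split_ifs <;> simp_all <;> try omega
    all_goals (rcases ‹_ ∨ _› with rfl | rfl <;> simp_all)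
    all_goals (rcases ‹_ ∨ _› with rfl | rfl <;> simp_all)

lemma sym2_eq_diag_of_forall {V : Type*} (z : Sym2 V) (a : V)
    (h : ∀ v ∈ z, v = a) : z = Sym2.diag a := by
  induction z using Sym2.ind with
  | _ p q =>
    rw [h p (by simp [Sym2.mem_iff]), h q (by simp [Sym2.mem_iff])]
    rfl

lemma mdeg_map_u {V E : Type*} [DecidableEq V] (ends : E → Sym2 V) (s : Finset E)
    {p q : V} (h : p ≠ q) :
    mdeg (fun e => Sym2.map (fun v => if v = q then p else v) (ends e)) s p
      = mdeg ends s p + mdeg ends s q := by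
  unfold mdeg
  rw [← Finset.sum_add_distrib]
  exact Finset.sum_congr rfl fun e _ => T_map_u h (ends e)

lemma mdeg_map_w {V E : Type*} [DecidableEq V] (ends : E → Sym2 V) (s : Finset E)
    {p q : V} (h : p ≠ q) :
    mdeg (fun e => Sym2.map (fun v => if v = q then p else v) (ends e)) s q = 0 := by
  unfold mdeg
  exact Finset.sum_eq_zero fun e _ => T_map_w h (ends e)

lemma mdeg_map_ne {V E : Type*} [DecidableEq V] (ends : E → Sym2 V) (s : Finset E)
    {p q i : V} (hip : i ≠ p) (hiq : i ≠ q) :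
    mdeg (fun e => Sym2.map (fun v => if v = q then p else v) (ends e)) s i
      = mdeg ends s i := by
  unfold mdeg
  exact Finset.sum_congr rfl fun e _ => T_map_ne (ends e) i hip hiq

lemma main_ind {V E : Type*} [Fintype V] [Fintype E] [DecidableEq V] [DecidableEq E]
    (γ : ℝ) (A : ℤ → ℝ)
    (hid : ∀ m n : ℕ, fval γ (m + n) = fval γ m * fval γ n + fval γ (m+1) * fval γ (n+1))
    (hbase : ∀ t : Finset E, (∑ s ∈ t.powerset, fval γ (2 * s.card)) = A ((t.card:ℤ) - 1)) :
    ∀ (n : ℕ) (ends : E → Sym2 V) (U : Finset E) (W : Finset V),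
      W.card = n → W.Nonempty →
      (∀ e ∈ U, ∀ v ∈ ends e, v ∈ W) →
      (∀ a ∈ W, ∀ b ∈ W, Relation.ReflTransGen
        (fun x y => ∃ e ∈ U, x ∈ ends e ∧ y ∈ ends e) a b) →
      (∑ s ∈ U.powerset, ∏ i : V, fval γ (mdeg ends s i)) = A ((U.card:ℤ) - (W.card:ℤ)) := by
  intro n
  induction n using Nat.strong_induction_on with
  | _ n ih =>
  intro ends U W hWn hWne hend hconn
  by_cases h1 : W.card = 1
  · obtain ⟨a₀, ha₀⟩ := Finset.card_eq_one.mp h1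
    have hdiag : ∀ e ∈ U, ends e = Sym2.diag a₀ := by
      intro e he
      have hmem : ∀ v ∈ ends e, v = a₀ := by
        intro v hv
        have := hend e he v hv
        rw [ha₀, Finset.mem_singleton] at this
        exact this
      exact sym2_eq_diag_of_forall (ends e) a₀ hmem
    have hsum : ∀ s ∈ U.powerset, (∏ i : V, fval γ (mdeg ends s i)) = fval γ (2 * s.card) := by
      intro s hs
      have hsub := Finset.mem_powerset.mp hs
      have hda : mdeg ends s a₀ = 2 * s.card := by
        unfold mdeg
        rw [Finset.sum_congr rfl (fun e he => if_pos (hdiag e (hsub he)))]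
        rw [Finset.sum_const, smul_eq_mul]; omega
      have hdo : ∀ i, i ≠ a₀ → mdeg ends s i = 0 := by
        intro i hi
        unfold mdeg
        refine Finset.sum_eq_zero fun e he => ?_
        rw [hdiag e (hsub he)]
        simp [Sym2.diag, Sym2.eq_iff, Sym2.mem_iff, hi, Ne.symm hi]
      rw [Fintype.prod_eq_single a₀ (fun i hi => by rw [hdo i hi, fval_zero'])]
      rw [hda]
    rw [Finset.sum_congr rfl hsum, hbase U, h1]
    norm_num
  · -- inductive step
    have h0 : 0 < W.card := Finset.card_pos.mpr hWne
    have h2 : 1 < W.card := by omega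
    obtain ⟨a₀, ha₀, b₀, hb₀, hab⟩ := Finset.one_lt_card.mp h2
    obtain ⟨p, q, hpq, hpqne⟩ := exists_step (hconn a₀ ha₀ b₀ hb₀) hab
    obtain ⟨e₀, he₀U, hpe, hqe⟩ := hpq
    have hends₀ : ends e₀ = s(p, q) := sym2_eq_pair _ hpqne hpe hqe
    have hpW : p ∈ W := hend e₀ he₀U p hpe
    have hqW : q ∈ W := hend e₀ he₀U q hqe
    set r : V → V := (fun v => if v = q then p else v) with hr
    set ends' : E → Sym2 V := (fun e => Sym2.map r (ends e)) with hends'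
    set U' : Finset E := U.erase e₀ with hU'
    set W' : Finset V := W.erase q with hW'
    have hrq : r q = p := by simp [hr]
    have hrne : ∀ v, v ≠ q → r v = v := by intro v hv; simp [hr, hv]
    have hrp : r p = p := hrne p hpqne
    have hW'card : W'.card = W.card - 1 := Finset.card_erase_of_mem hqW
    have hU'card : U'.card = U.card - 1 := Finset.card_erase_of_mem he₀U
    have hU0 : 0 < U.card := Finset.card_pos.mpr ⟨e₀, he₀U⟩
    have hpW' : p ∈ W' := Finset.mem_erase.mpr ⟨hpqne, hpW⟩
    have hend' : ∀ e ∈ U', ∀ v ∈ ends' e, v ∈ W' := by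
      intro e he v hv
      rw [hends'] at hv
      obtain ⟨v₀, hv₀, rfl⟩ := Sym2.mem_map.mp hv
      have hv₀W := hend e (Finset.mem_of_mem_erase he) v₀ hv₀
      by_cases hvq : v₀ = q
      · rw [hvq, hrq]; exact hpW'
      · rw [hrne v₀ hvq]; exact Finset.mem_erase.mpr ⟨hvq, hv₀W⟩
    have hmapstep : ∀ x y, (∃ e ∈ U, x ∈ ends e ∧ y ∈ ends e) →
        (r x = r y) ∨ (∃ e ∈ U', r x ∈ ends' e ∧ r y ∈ ends' e) := by
      rintro x y ⟨e, heU, hx, hy⟩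
      by_cases he : e = e₀
      · subst he
        left
        rw [hends₀, Sym2.mem_iff] at hx hy
        have hval : ∀ z, z = p ∨ z = q → r z = p := by
          rintro z (rfl | rfl)
          · exact hrp
          · exact hrq
        rw [hval x hx, hval y hy]
      · right
        refine ⟨e, Finset.mem_erase.mpr ⟨he, heU⟩, ?_, ?_⟩
        · rw [hends']; exact Sym2.mem_map.mpr ⟨x, hx, rfl⟩
        · rw [hends']; exact Sym2.mem_map.mpr ⟨y, hy, rfl⟩
    have htrans : ∀ x y, Relation.ReflTransGen
        (fun x y => ∃ e ∈ U, x ∈ ends e ∧ y ∈ ends e) x y →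
        Relation.ReflTransGen (fun x y => ∃ e ∈ U', x ∈ ends' e ∧ y ∈ ends' e) (r x) (r y) := by
      intro x y h
      induction h with
      | refl => exact Relation.ReflTransGen.refl
      | tail h1 h2 ihh =>
        rcases hmapstep _ _ h2 with heq | hstep
        · rwa [← heq]
        · exact ihh.tail hstep
    have hconn' : ∀ a ∈ W', ∀ b ∈ W',
        Relation.ReflTransGen (fun x y => ∃ e ∈ U', x ∈ ends' e ∧ y ∈ ends' e) a b := by
      intro a ha b hb
      obtain ⟨haq, haW⟩ := Finset.mem_erase.mp ha
      obtain ⟨hbq, hbW⟩ := Finset.mem_erase.mp hb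
      have := htrans a b (hconn a haW b hbW)
      rwa [hrne a haq, hrne b hbq] at this
    have ihres := ih W'.card (by rw [hW'card]; omega) ends' U' W' rfl ⟨p, hpW'⟩ hend' hconn'
    -- counting
    have key : ∀ s ∈ U'.powerset,
        (∏ i : V, fval γ (mdeg ends s i)) + (∏ i : V, fval γ (mdeg ends (insert e₀ s) i))
          = ∏ i : V, fval γ (mdeg ends' s i) := by
      intro s hs
      have hes : e₀ ∉ s := fun h => Finset.notMem_erase e₀ U (Finset.mem_powerset.mp hs h)
      have hTp : (if ends e₀ = Sym2.diag p then 2 else if p ∈ ends e₀ then 1 else 0 : ℕ) = 1 := by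
        rw [hends₀]
        simp [Sym2.diag, Sym2.eq_iff, Sym2.mem_iff, hpqne, Ne.symm hpqne]
      have hTq : (if ends e₀ = Sym2.diag q then 2 else if q ∈ ends e₀ then 1 else 0 : ℕ) = 1 := by
        rw [hends₀]
        simp [Sym2.diag, Sym2.eq_iff, Sym2.mem_iff, hpqne, Ne.symm hpqne]
      have hTi : ∀ i, i ≠ p → i ≠ q →
          (if ends e₀ = Sym2.diag i then 2 else if i ∈ ends e₀ then 1 else 0 : ℕ) = 0 := by
        intro i hip hiq
        rw [hends₀]
        simp [Sym2.diag, Sym2.eq_iff, Sym2.mem_iff, hip, hiq, Ne.symm hip, Ne.symm hiq]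
      have hp1 : mdeg ends (insert e₀ s) p = mdeg ends s p + 1 := by
        unfold mdeg; rw [Finset.sum_insert hes, hTp]; omega
      have hq1 : mdeg ends (insert e₀ s) q = mdeg ends s q + 1 := by
        unfold mdeg; rw [Finset.sum_insert hes, hTq]; omega
      have hti : ∀ i, i ≠ p → i ≠ q →
          mdeg ends (insert e₀ s) i = mdeg ends s i := by
        intro i hip hiq
        unfold mdeg; rw [Finset.sum_insert hes, hTi i hip hiq]; omega
      have hm_u : mdeg ends' s p = mdeg ends s p + mdeg ends s q :=
        mdeg_map_u ends s hpqne
      have hm_w : mdeg ends' s q = 0 := mdeg_map_w ends s hpqne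
      have hm_ne : ∀ i, i ≠ p → i ≠ q → mdeg ends' s i = mdeg ends s i :=
        fun i hip hiq => mdeg_map_ne ends s hip hiq
      have hqmem : q ∈ Finset.univ.erase p :=
        Finset.mem_erase.mpr ⟨Ne.symm hpqne, Finset.mem_univ q⟩
      have hsplit : ∀ g : V → ℝ, (∏ i : V, g i)
          = g p * (g q * ∏ i ∈ (Finset.univ.erase p).erase q, g i) := by
        intro g
        rw [← Finset.mul_prod_erase Finset.univ g (Finset.mem_univ p),
          ← Finset.mul_prod_erase (Finset.univ.erase p) g hqmem]
      rw [hsplit (fun i => fval γ (mdeg ends s i)),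
        hsplit (fun i => fval γ (mdeg ends (insert e₀ s) i)),
        hsplit (fun i => fval γ (mdeg ends' s i))]
      have htail1 : (∏ i ∈ (Finset.univ.erase p).erase q, fval γ (mdeg ends (insert e₀ s) i))
          = ∏ i ∈ (Finset.univ.erase p).erase q, fval γ (mdeg ends s i) := by
        refine Finset.prod_congr rfl fun i hi => ?_
        obtain ⟨hiq, hi'⟩ := Finset.mem_erase.mp hi
        obtain ⟨hip, _⟩ := Finset.mem_erase.mp hi'
        rw [hti i hip hiq]
      have htail2 : (∏ i ∈ (Finset.univ.erase p).erase q, fval γ (mdeg ends' s i))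
          = ∏ i ∈ (Finset.univ.erase p).erase q, fval γ (mdeg ends s i) := by
        refine Finset.prod_congr rfl fun i hi => ?_
        obtain ⟨hiq, hi'⟩ := Finset.mem_erase.mp hi
        obtain ⟨hip, _⟩ := Finset.mem_erase.mp hi'
        rw [hm_ne i hip hiq]
      simp only [hp1, hq1, hm_u, hm_w, htail1, htail2, fval_zero']
      rw [hid (mdeg ends s p) (mdeg ends s q)]
      ring
    conv_lhs => rw [← Finset.insert_erase he₀U]
    rw [Finset.sum_powerset_insert (Finset.notMem_erase e₀ U), ← Finset.sum_add_distrib,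
      Finset.sum_congr rfl key, ihres, hU'card, hW'card]
    congr 1
    omega

lemma fval0_nonneg (n : ℕ) : 0 ≤ fval (0:ℝ) n := by
  rcases Nat.even_or_odd n with ⟨k, rfl⟩ | ⟨k, rfl⟩
  · rw [show k + k = 2 * k by ring, fval_zero_even]; norm_num
  · rw [show 2 * k + 1 = 2 * k + 1 from rfl, fval_zero_odd]

lemma fval0_le_one (n : ℕ) : fval (0:ℝ) n ≤ 1 := by
  rcases Nat.even_or_odd n with ⟨k, rfl⟩ | ⟨k, rfl⟩
  · rw [show k + k = 2 * k by ring, fval_zero_even]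
  · rw [fval_zero_odd]; norm_num

/-- Bounds on the number of sub-coregraphs (spanning subgraphs with no vertex of
degree 1) of a connected multigraph `G`, in terms of the nullity `n(G)`. -/
theorem stmt_17 {V E : Type*} [Fintype V] [Fintype E] [DecidableEq V] [Nonempty V]
    (ends : E → Sym2 V)
    (hconn : ∀ a b : V,
      Relation.ReflTransGen (fun u w => ∃ e : E, u ∈ ends e ∧ w ∈ ends e) a b) :
    (2 : ℝ) ^ ((Fintype.card E : ℤ) - Fintype.card V + 1) ≤
      ((Finset.univ.filter (fun s : Finset E => ∀ i : V, mdeg ends s i ≠ 1)).card : ℝ) ∧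
    ((Finset.univ.filter (fun s : Finset E => ∀ i : V, mdeg ends s i ≠ 1)).card : ℝ) ≤
      ((5 - Real.sqrt 5) / 2) ^ (((Fintype.card E : ℤ) - Fintype.card V + 1) - 1) +
      ((5 + Real.sqrt 5) / 2) ^ (((Fintype.card E : ℤ) - Fintype.card V + 1) - 1) := by
  classical
  have hWcard : (Finset.univ : Finset V).card = Fintype.card V := Finset.card_univ
  have hUcard : (Finset.univ : Finset E).card = Fintype.card E := Finset.card_univ
  have hend : ∀ e ∈ (Finset.univ : Finset E), ∀ v ∈ ends e, v ∈ (Finset.univ : Finset V) :=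
    fun _ _ v _ => Finset.mem_univ v
  have hconn' : ∀ a ∈ (Finset.univ : Finset V), ∀ b ∈ (Finset.univ : Finset V),
      Relation.ReflTransGen
        (fun x y => ∃ e ∈ (Finset.univ : Finset E), x ∈ ends e ∧ y ∈ ends e) a b := by
    intro a _ b _
    refine Relation.ReflTransGen.mono ?_ a b (hconn a b)
    exact fun x y ⟨e, hx, hy⟩ => ⟨e, Finset.mem_univ e, hx, hy⟩
  -- lower bound via γ = 0
  have hlow := main_ind (V := V) (E := E) 0 (fun z => (2:ℝ) ^ (z + 1))
    (fun m n => fval_add 0 m n)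
    (fun t => by
      rw [base_zero t]
      show ((2:ℝ)) ^ (t.card) = (2:ℝ) ^ (((t.card:ℤ) - 1) + 1)
      rw [sub_add_cancel, zpow_natCast])
    (Finset.univ : Finset V).card ends Finset.univ Finset.univ rfl
    Finset.univ_nonempty hend hconn'
  -- upper bound via γ = 1
  have hxy : ((5 - Real.sqrt 5)/2) * ((5 + Real.sqrt 5)/2) = 5 := by
    linear_combination (-(1:ℝ)/4) * s5
  have hxinv : ((5 - Real.sqrt 5)/2)⁻¹ = ((5 + Real.sqrt 5)/2) / 5 :=
    inv_eq_of_mul_eq_one_right (by linear_combination hxy / 5)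
  have hyinv : ((5 + Real.sqrt 5)/2)⁻¹ = ((5 - Real.sqrt 5)/2) / 5 :=
    inv_eq_of_mul_eq_one_right (by linear_combination hxy / 5)
  have hhigh := main_ind (V := V) (E := E) 1
    (fun z => ((5 - Real.sqrt 5)/2) ^ z + ((5 + Real.sqrt 5)/2) ^ z)
    (fun m n => fval_add 1 m n)
    (fun t => by
      obtain ⟨hE, _⟩ := base_one t
      show _ = ((5 - Real.sqrt 5)/2) ^ ((t.card:ℤ) - 1) + ((5 + Real.sqrt 5)/2) ^ ((t.card:ℤ) - 1)
      rw [zpow_sub_one₀ (ne_of_gt hx0), zpow_sub_one₀ (ne_of_gt hy0),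
        zpow_natCast, zpow_natCast, hxinv, hyinv]
      linear_combination hE / 5)
    (Finset.univ : Finset V).card ends Finset.univ Finset.univ rfl
    Finset.univ_nonempty hend hconn'
  rw [Finset.powerset_univ, hUcard, hWcard] at hlow hhigh
  have hcount : ((Finset.univ.filter
      (fun s : Finset E => ∀ i : V, mdeg ends s i ≠ 1)).card : ℝ)
      = ∑ s : Finset E, (if (∀ i : V, mdeg ends s i ≠ 1) then (1:ℝ) else 0) := by
    rw [Finset.sum_boole]
  constructor
  · have : (2:ℝ) ^ ((Fintype.card E : ℤ) - Fintype.card V + 1)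
        = ∑ s : Finset E, ∏ i : V, fval (0:ℝ) (mdeg ends s i) := hlow.symm
    rw [this, hcount]
    refine Finset.sum_le_sum fun s _ => ?_
    by_cases hC : ∀ i : V, mdeg ends s i ≠ 1
    · rw [if_pos hC]
      exact Finset.prod_le_one (fun i _ => fval0_nonneg _) (fun i _ => fval0_le_one _)
    · rw [if_neg hC]
      push_neg at hC
      obtain ⟨i, hi⟩ := hC
      have : (∏ j : V, fval (0:ℝ) (mdeg ends s j)) = 0 :=
        Finset.prod_eq_zero (Finset.mem_univ i)
          (by rw [hi]; exact fval_zero_odd 0)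
      rw [this]
  · have harg : ((Fintype.card E : ℤ) - Fintype.card V + 1) - 1
        = (Fintype.card E : ℤ) - Fintype.card V := by ring
    have hhigh' : ∑ s : Finset E, ∏ i : V, fval (1:ℝ) (mdeg ends s i)
        = ((5 - Real.sqrt 5)/2) ^ ((Fintype.card E:ℤ) - Fintype.card V)
          + ((5 + Real.sqrt 5)/2) ^ ((Fintype.card E:ℤ) - Fintype.card V) := hhigh
    rw [harg, hcount, ← hhigh']
    refine Finset.sum_le_sum fun s _ => ?_
    by_cases hC : ∀ i : V, mdeg ends s i ≠ 1
    · rw [if_pos hC]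
      refine Finset.prod_le_prod (fun i _ => by norm_num) (fun i _ => fval_one_ge_one _ (hC i)) |>.trans_eq' ?_
      simp
    · rw [if_neg hC]
      exact Finset.prod_nonneg fun i _ => fval_one_nonneg _
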